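/- Let n ≥ 2, let C be the n×n cyclic shift matrix (C e_1 = e_n, C e_k = e_{k-1} for k ≥ 2), let W be block diagonal with identity I_{n-2} and the 2×2 block (1/√2)[[1,−1],[1,1]], let U = WC, and let P = E_{1,1}. Then for k = 1, …, n−2 the matrix (U*)^k P U^k equals E_{k+1,k+1} (and hence commutes with P), but (U*)^{n-1} P U^{n-1} does not commute with P. -/

import Mathlib

open Matrix

set_option maxHeartbeats 1000000 in
theorem cycle_example_sharp {n : ℕ} (hn : 2 ≤ n)
    (C W U P : Matrix (Fin n) (Fin n) ℂ)
    (hC : C = Matrix.of fun i j : Fin n => if ((i : ℕ) + 1) % n = (j : ℕ) then (1 : ℂ) else 0)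
    (hW : W = Matrix.of fun i j : Fin n =>
      if (i : ℕ) < n - 2 then (if i = j then (1 : ℂ) else 0)
      else if (i : ℕ) = n - 2 then
        (if (j : ℕ) = n - 2 then (1 / Real.sqrt 2 : ℝ) else
         if (j : ℕ) = n - 1 then (-(1 / Real.sqrt 2) : ℝ) else 0)
      else -- (i : ℕ) = n - 1
        (if (j : ℕ) = n - 2 then (1 / Real.sqrt 2 : ℝ) else
         if (j : ℕ) = n - 1 then (1 / Real.sqrt 2 : ℝ) else 0))
    (hU : U = W * C)
    (hP : P = Matrix.single (⟨0, by omega⟩ : Fin n) (⟨0, by omega⟩ : Fin n) (1 : ℂ)) :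
    (∀ k : ℕ, 1 ≤ k → k ≤ n - 2 → ∀ hk : k < n,
        (Uᴴ) ^ k * P * U ^ k = Matrix.single (⟨k, hk⟩ : Fin n) (⟨k, hk⟩ : Fin n) (1 : ℂ)) ∧
    ¬ Commute P ((Uᴴ) ^ (n - 1) * P * U ^ (n - 1)) := by
  obtain ⟨z, hz⟩ : ∃ z : Fin n, z = ⟨0, by omega⟩ := ⟨⟨0, by omega⟩, rfl⟩
  rw [show (⟨0, by omega⟩ : Fin n) = z from hz.symm] at hP
  have hzv : (z : ℕ) = 0 := by rw [hz]
  -- row i of U for i < n - 2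
  have hUrow : ∀ i j : Fin n, (i : ℕ) < n - 2 →
      U i j = if (j : ℕ) = (i : ℕ) + 1 then 1 else 0 := by
    intro i j hi
    rw [hU, hW, hC, mul_apply]
    rw [Finset.sum_eq_single i]
    · have h1 : ((i : ℕ) + 1) % n = (i : ℕ) + 1 := Nat.mod_eq_of_lt (by omega)
      simp only [of_apply, if_pos hi, h1]
      simp [eq_comm]
    · intro b _ hb
      simp only [of_apply, if_pos hi]
      rw [if_neg (fun hh => hb hh.symm), zero_mul]
    · intro h; exact absurd (Finset.mem_univ i) h
  -- row 0 of U^k for k ≤ n - 2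
  have hpow : ∀ k : ℕ, k ≤ n - 2 → ∀ j : Fin n,
      (U ^ k) z j = if (j : ℕ) = k then 1 else 0 := by
    intro k
    induction k with
    | zero =>
      intro _ j
      simp only [pow_zero, one_apply]
      by_cases h : z = j
      · rw [if_pos h, if_pos (by rw [← h, hzv])]
      · rw [if_neg h, if_neg (fun hh => h (Fin.ext (by rw [hzv, hh])))]
    | succ k ih =>
      intro hk j
      have hk' : k ≤ n - 2 := by omega
      have hkn : k < n := by omega
      rw [pow_succ, mul_apply, Finset.sum_eq_single (⟨k, hkn⟩ : Fin n)]
      · rw [ih hk' ⟨k, hkn⟩, if_pos rfl, one_mul,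
            hUrow ⟨k, hkn⟩ j (by simp only [Fin.val_mk]; omega)]
      · intro b _ hb
        rw [ih hk' b, if_neg (fun hh => hb (Fin.ext hh)), zero_mul]
      · intro h; exact absurd (Finset.mem_univ _) h
  -- row n-2 of W
  have hWlast : ∀ m : Fin n, W ⟨n - 2, by omega⟩ m =
      ((1 / Real.sqrt 2 : ℝ) : ℂ) * ((if m = (⟨n - 2, by omega⟩ : Fin n) then 1 else 0)
        - (if m = (⟨n - 1, by omega⟩ : Fin n) then 1 else 0)) := by
    intro m
    rw [hW]
    simp only [of_apply, Fin.ext_iff, Fin.val_mk]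
    split_ifs
    all_goals try (exfalso; omega)
    all_goals push_cast
    all_goals ring
  -- row n-2 of U
  have hlast : ∀ j : Fin n, U ⟨n - 2, by omega⟩ j =
      ((1 / Real.sqrt 2 : ℝ) : ℂ) *
        ((if (j : ℕ) = n - 1 then 1 else 0) - (if (j : ℕ) = 0 then 1 else 0)) := by
    intro j
    rw [hU, mul_apply]
    have step : ∀ m : Fin n, W ⟨n - 2, by omega⟩ m * C m j =
        ((1 / Real.sqrt 2 : ℝ) : ℂ) *
          (((if m = (⟨n - 2, by omega⟩ : Fin n) then 1 else 0)
            - (if m = (⟨n - 1, by omega⟩ : Fin n) then 1 else 0)) * C m j) := by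
      intro m; rw [hWlast m, mul_assoc]
    rw [Finset.sum_congr rfl fun m _ => step m, ← Finset.mul_sum]
    congr 1
    simp only [sub_mul, ite_mul, one_mul, zero_mul, Finset.sum_sub_distrib]
    rw [Finset.sum_ite_eq' Finset.univ (⟨n - 2, by omega⟩ : Fin n) (fun m => C m j),
        Finset.sum_ite_eq' Finset.univ (⟨n - 1, by omega⟩ : Fin n) (fun m => C m j)]
    simp only [Finset.mem_univ, if_pos]
    rw [hC]
    simp only [of_apply, Fin.val_mk]
    have e2 : ((n - 2 : ℕ) + 1) % n = n - 1 := by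
      rw [Nat.mod_eq_of_lt (by omega)]; omega
    have e3 : ((n - 1 : ℕ) + 1) % n = 0 := by
      rw [show (n - 1) + 1 = n by omega, Nat.mod_self]
    rw [e2, e3]
    congr 1
    · by_cases h : (j : ℕ) = n - 1
      · rw [if_pos h, if_pos h.symm]
      · rw [if_neg h, if_neg (fun hh => h hh.symm)]
    · by_cases h : (j : ℕ) = 0
      · rw [if_pos h, if_pos h.symm]
      · rw [if_neg h, if_neg (fun hh => h hh.symm)]
  -- sandwich lemma
  have hsand : ∀ (A : Matrix (Fin n) (Fin n) ℂ) (i j : Fin n),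
      (Aᴴ * P * A) i j = (starRingEnd ℂ) (A z i) * A z j := by
    intro A i j
    rw [hP, mul_assoc, mul_apply, Finset.sum_eq_single z]
    · rw [conjTranspose_apply, Matrix.single_mul_apply_same, one_mul]
      rw [starRingEnd_apply]
    · intro b _ hb
      rw [Matrix.single_mul_apply_of_ne _ _ _ _ _ hb, mul_zero]
    · intro h; exact absurd (Finset.mem_univ _) h
  constructor
  · intro k hk1 hk2 hkn
    rw [← conjTranspose_pow]
    ext i j
    rw [hsand, hpow k hk2 i, hpow k hk2 j]
    by_cases hi : (i : ℕ) = k <;> by_cases hj : (j : ℕ) = k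
    · have hij : i = j := Fin.ext (hi.trans hj.symm)
      subst hij
      rw [show (⟨k, hkn⟩ : Fin n) = i from Fin.ext hi.symm]
      simp [hi]
    · rw [if_pos hi, if_neg hj, mul_zero,
          Matrix.single_apply_of_col_ne _ _ (fun hh => hj (by rw [← hh]))]
    · rw [if_neg hi, if_pos hj, map_zero, zero_mul,
          Matrix.single_apply_of_row_ne (fun hh => hi (by rw [← hh]))]
    · rw [if_neg hi, map_zero, zero_mul,
          Matrix.single_apply_of_row_ne (fun hh => hi (by rw [← hh]))]
  · -- the non-commuting part
    have hn2 : n - 1 = (n - 2) + 1 := by omega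
    have hrowN1 : ∀ j : Fin n, (U ^ (n - 1)) z j = U ⟨n - 2, by omega⟩ j := by
      intro j
      rw [hn2, pow_succ, mul_apply, Finset.sum_eq_single (⟨n - 2, by omega⟩ : Fin n)]
      · rw [hpow (n - 2) le_rfl, if_pos rfl, one_mul]
      · intro b _ hb
        rw [hpow (n - 2) le_rfl, if_neg (fun hh => hb (Fin.ext hh)), zero_mul]
      · intro h; exact absurd (Finset.mem_univ _) h
    intro hcomm
    have hne : (⟨n - 1, by omega⟩ : Fin n) ≠ z := by
      intro hh; rw [Fin.ext_iff, hzv] at hh; simp at hh; omega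
    have h01 := congrFun (congrFun hcomm.eq z) ⟨n - 1, by omega⟩
    rw [← conjTranspose_pow, hP] at h01
    simp only [Matrix.single_mul_apply_same,
        Matrix.mul_single_apply_of_ne _ _ _ _ _ hne, one_mul] at h01
    rw [← hP] at h01
    rw [hsand] at h01
    rw [hrowN1, hrowN1, hlast, hlast] at h01
    rw [show ((⟨n - 1, by omega⟩ : Fin n) : ℕ) = n - 1 from rfl,
        hzv] at h01
    rw [if_neg (by omega : ¬ (0 : ℕ) = n - 1), if_pos rfl, if_pos rfl,
        if_neg (by omega : ¬ (n - 1 : ℕ) = 0)] at h01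
    simp only [zero_sub, sub_zero, mul_one, mul_neg_one, map_neg, _root_.map_mul,
      Complex.conj_ofReal, neg_mul] at h01
    rw [neg_eq_zero, ← Complex.ofReal_mul, Complex.ofReal_eq_zero,
        div_mul_div_comm, one_mul, Real.mul_self_sqrt (by norm_num)] at h01
    norm_num at h01
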